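/- For each integer n ≥ 2 let C_n be the multiset of roots in ℂ, counted with multiplicity, of the polynomial n·z^{n−1} + 1 (the finite critical points of p_n(z) = z^n + z; C_n has exactly n − 1 elements). Then for every bounded continuous function f : ℂ → ℝ, (1/(n−1)) · ∑_{c ∈ C_n} f(c^n + c) → (1/2π) · ∫₀^{2π} f(e^{iθ}) dθ as n → ∞; that is, the normalized counting measures of the finite critical values of p_n converge weakly to the uniform probability measure on the unit circle. -/

import Mathlib

open Polynomial Filter

noncomputable def sfun (n : ℕ) : ℝ :=
  (1 - 1/(n:ℝ)) * (n:ℝ) ^ (-(1/(((n-1:ℕ)):ℝ)) : ℝ)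

lemma lemA (f : BoundedContinuousFunction ℂ ℝ) (n : ℕ) (hn : 2 ≤ n) :
    (1 / ((n : ℝ) - 1)) *
      (((C (n : ℂ) * X ^ (n - 1) + 1 : ℂ[X]).roots).map
        fun c => f (c ^ n + c)).sum
    = (1/(((n-1:ℕ)):ℝ)) * ∑ k ∈ Finset.range (n-1),
        f ((sfun n : ℂ) *
          Complex.exp ((((2*(k:ℝ)+1) * Real.pi/(((n-1:ℕ)):ℝ)) : ℝ) * Complex.I)) := by
  set m := n - 1 with hm
  have hm1 : 1 ≤ m := by omega
  have hnm : n = m + 1 := by omega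
  have hmR : ((m:ℝ)) ≠ 0 := Nat.cast_ne_zero.mpr (by omega)
  have hmC : ((m:ℂ)) ≠ 0 := Nat.cast_ne_zero.mpr (by omega)
  have hnR : ((n:ℝ)) ≠ 0 := Nat.cast_ne_zero.mpr (by omega)
  have hnC : ((n:ℂ)) ≠ 0 := Nat.cast_ne_zero.mpr (by omega)
  set r : ℝ := (n:ℝ) ^ (-(1/((m:ℕ):ℝ)) : ℝ) with hr
  set α : ℂ := (r : ℂ) * Complex.exp (Real.pi * Complex.I / m) with hαdef
  -- α ^ m = -1/n
  have hrm : r ^ m = ((n:ℝ))⁻¹ := by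
    rw [hr, ← Real.rpow_natCast ((n:ℝ) ^ (-(1/((m:ℕ):ℝ)) : ℝ)) m,
      ← Real.rpow_mul (Nat.cast_nonneg n)]
    have : (-(1/((m:ℕ):ℝ)) : ℝ) * (m:ℝ) = -1 := by field_simp
    rw [this, Real.rpow_neg_one]
  have hα : α ^ m = -1/(n:ℂ) := by
    rw [hαdef, mul_pow, ← Complex.exp_nat_mul]
    have h1 : (m : ℂ) * (Real.pi * Complex.I / m) = Real.pi * Complex.I := by
      field_simp
    rw [h1, Complex.exp_pi_mul_I, ← Complex.ofReal_pow, hrm]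
    push_cast
    field_simp
  have hζ : IsPrimitiveRoot (Complex.exp (2 * Real.pi * Complex.I / m)) m :=
    Complex.isPrimitiveRoot_exp m (by omega)
  -- roots identification
  have hpoly : (C (n : ℂ) * X ^ m + 1 : ℂ[X]) = C (n:ℂ) * (X ^ m - C (-1/(n:ℂ))) := by
    rw [mul_sub, ← C_mul]
    have : (n:ℂ) * (-1/(n:ℂ)) = -1 := by field_simp
    rw [this, map_neg, C_1, sub_neg_eq_add]
  have hroots : (C (n : ℂ) * X ^ m + 1 : ℂ[X]).roots
      = (Multiset.range m).map (fun k => Complex.exp (2 * Real.pi * Complex.I / m) ^ k * α) := by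
    rw [hpoly, roots_C_mul _ hnC, ← nthRoots, hζ.nthRoots_eq hα]
  rw [hroots, Multiset.map_map]
  -- identify coefficients
  have hcoef : (1 / ((n : ℝ) - 1)) = (1/((m:ℕ):ℝ)) := by
    rw [hm, Nat.cast_sub (by omega), Nat.cast_one]
  rw [hcoef]
  congr 1
  -- sum over multiset range = finset sum
  rw [← Finset.range_val, ← Finset.sum]
  refine Finset.sum_congr rfl fun k hk => ?_
  simp only [Function.comp_apply]
  congr 1
  -- the value at the root
  set c : ℂ := Complex.exp (2 * Real.pi * Complex.I / m) ^ k * α with hc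
  have hcm : c ^ m = -1/(n:ℂ) := by
    rw [hc, mul_pow, ← pow_mul, mul_comm k m, pow_mul, hζ.pow_eq_one, one_pow, one_mul, hα]
  have hcn : c ^ n + c = (1 - 1/(n:ℂ)) * c := by
    have h2 : c ^ n = c ^ m * c := by rw [hnm, pow_succ]
    rw [h2, hcm]; ring
  rw [hcn]
  -- now c = r * exp(((2k+1)π/m) I)
  rw [hc, hαdef, ← Complex.exp_nat_mul, mul_comm (Complex.exp _) ((r:ℂ) * _),
    mul_assoc, ← Complex.exp_add]
  have hexp : Real.pi * Complex.I / m + (k:ℂ) * (2 * Real.pi * Complex.I / m)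
      = (((2*(k:ℝ)+1) * Real.pi/((m:ℕ):ℝ) : ℝ) : ℂ) * Complex.I := by
    push_cast
    field_simp
    ring
  rw [hexp, sfun]
  push_cast
  ring

lemma lemB : Tendsto sfun atTop (nhds 1) := by
  have h1 : Tendsto (fun n : ℕ => (1 - 1/(n:ℝ))) atTop (nhds 1) := by
    have := tendsto_one_div_atTop_nhds_zero_nat (𝕜 := ℝ)
    simpa using (tendsto_const_nhds (x := (1:ℝ))).sub this
  -- log n / (n-1) → 0
  have hlogdiv : Tendsto (fun x : ℝ => Real.log x / x) atTop (nhds 0) :=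
    Real.isLittleO_log_id_atTop.tendsto_div_nhds_zero
  have hupper : Tendsto (fun n : ℕ => 2 * (Real.log n / (n:ℝ))) atTop (nhds 0) := by
    simpa using ((hlogdiv.comp tendsto_natCast_atTop_atTop).const_mul 2)
  have hlog : Tendsto (fun n : ℕ => Real.log n / (((n-1:ℕ)):ℝ)) atTop (nhds 0) := by
    refine tendsto_of_tendsto_of_tendsto_of_le_of_le' tendsto_const_nhds hupper ?_ ?_
    · filter_upwards [eventually_ge_atTop 2] with n hn
      have h2 : (0:ℝ) ≤ Real.log n := Real.log_nonneg (by exact_mod_cast (by omega : 1 ≤ n))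
      positivity
    · filter_upwards [eventually_ge_atTop 2] with n hn
      have hc : (((n-1:ℕ)):ℝ) = (n:ℝ) - 1 := by
        rw [Nat.cast_sub (by omega), Nat.cast_one]
      have h2 : (0:ℝ) ≤ Real.log n := Real.log_nonneg (by
        have : (1:ℝ) ≤ (n:ℝ) := by exact_mod_cast Nat.one_le_of_lt hn
        linarith)
      have h3 : (2:ℝ) ≤ (n:ℝ) := by exact_mod_cast hn
      rw [hc, div_le_iff₀ (by linarith)]
      have : 2 * (Real.log n / (n:ℝ)) * ((n:ℝ) - 1) = Real.log n * (2 * ((n:ℝ)-1) / n) := by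
        field_simp
      rw [this]
      nlinarith [mul_le_mul_of_nonneg_left (show (1:ℝ) ≤ 2 * ((n:ℝ)-1)/n by
        rw [le_div_iff₀ (by linarith)]; linarith) h2]
  have h2 : Tendsto (fun n : ℕ => (n:ℝ) ^ (-(1/(((n-1:ℕ)):ℝ)) : ℝ)) atTop (nhds 1) := by
    have hexp : Tendsto (fun n : ℕ => Real.exp (-(Real.log n / (((n-1:ℕ)):ℝ)))) atTop (nhds 1) := by
      have := (Real.continuous_exp.tendsto 0).comp (by simpa using hlog.neg)
      rw [Real.exp_zero] at this
      exact this
    refine hexp.congr' ?_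
    filter_upwards [eventually_ge_atTop 2] with n hn
    have hn0 : (0:ℝ) < (n:ℝ) := by exact_mod_cast (by omega : 0 < n)
    rw [Real.rpow_def_of_pos hn0]
    congr 1
    ring
  have h3 := h1.mul h2
  rw [mul_one] at h3
  exact h3


lemma lemC (f : BoundedContinuousFunction ℂ ℝ) (s : ℕ → ℝ) (hs : Tendsto s atTop (nhds 1)) :
    Tendsto (fun n : ℕ => (1/(((n-1:ℕ)):ℝ)) * ∑ k ∈ Finset.range (n-1),
        f ((s n : ℂ) *
          Complex.exp ((((2*(k:ℝ)+1) * Real.pi/(((n-1:ℕ)):ℝ)) : ℝ) * Complex.I)))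
      atTop
      (nhds ((1 / (2 * Real.pi)) *
        ∫ θ in (0 : ℝ)..(2 * Real.pi), f (Complex.exp (θ * Complex.I)))) := by
  have pi_pos := Real.pi_pos
  set g : ℝ → ℝ := fun θ => f (Complex.exp (θ * Complex.I)) with hgdef
  have hg : Continuous g := f.continuous.comp (by continuity)
  set L : ℝ := (1 / (2 * Real.pi)) * ∫ θ in (0:ℝ)..(2*Real.pi), g θ with hL
  rw [Metric.tendsto_atTop]
  intro ε hε
  obtain ⟨δ, hδ0, hδ⟩ := Metric.uniformContinuousOn_iff.1
    ((isCompact_closedBall (0:ℂ) 2).uniformContinuousOn_of_continuous f.continuous.continuousOn)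
    (ε/3) (by positivity)
  obtain ⟨N1, hN1⟩ := (Metric.tendsto_atTop.1 hs) (min δ 1) (lt_min hδ0 one_pos)
  refine ⟨max N1 (⌈2*Real.pi/δ⌉₊ + 2), fun n hn => ?_⟩
  have hnN1 : N1 ≤ n := le_trans (le_max_left _ _) hn
  have hn2 : 2 ≤ n := by
    have := le_trans (le_max_right _ _) hn; omega
  set m := n - 1 with hm
  have hm1 : 1 ≤ m := by omega
  have hM : (0:ℝ) < (m:ℝ) := by exact_mod_cast (by omega : 0 < m)
  -- 2π/m < δ
  have hmδ : 2 * Real.pi / (m:ℝ) < δ := by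
    have h1 : (2*Real.pi/δ) ≤ (⌈2*Real.pi/δ⌉₊ : ℝ) := Nat.le_ceil _
    have h2 : (⌈2*Real.pi/δ⌉₊ + 1 : ℕ) ≤ m := by
      have := le_trans (le_max_right _ _) hn; omega
    have h3 : ((⌈2*Real.pi/δ⌉₊ + 1 : ℕ) : ℝ) ≤ (m:ℝ) := by exact_mod_cast h2
    push_cast at h3
    rw [div_lt_iff₀ hM]
    have h4 : 2*Real.pi/δ < (m:ℝ) := by linarith
    rw [div_lt_iff₀ hδ0] at h4
    linarith [h4]
  -- s n close to 1
  have hsn : |s n - 1| < min δ 1 := by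
    have := hN1 n hnN1
    rwa [Real.dist_eq] at this
  have hsnδ : |s n - 1| < δ := lt_of_lt_of_le hsn (min_le_left _ _)
  have hsn2 : |s n| ≤ 2 := by
    have h1 := lt_of_lt_of_le hsn (min_le_right _ _)
    have h2 := abs_sub_abs_le_abs_sub (s n) 1
    simp only [abs_one] at h2
    linarith [abs_nonneg (s n - 1)]
  set θk : ℕ → ℝ := fun k => (2*(k:ℝ)+1) * Real.pi/(m:ℝ) with hθk
  have hθk' : ∀ k : ℕ, (2*(k:ℝ)+1) * Real.pi/((m:ℕ):ℝ) = θk k := fun k => rfl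
  set a : ℕ → ℝ := fun k => 2*Real.pi*(k:ℝ)/(m:ℝ) with ha
  -- Step 1 : pointwise comparison on the circle points
  have step1 : ∀ k : ℕ, |f ((s n : ℂ) * Complex.exp ((θk k : ℝ) * Complex.I))
      - g (θk k)| ≤ ε/3 := by
    intro k
    have hy : Complex.exp ((θk k : ℝ) * Complex.I) ∈ Metric.closedBall (0:ℂ) 2 := by
      simp only [Metric.mem_closedBall, dist_zero_right,
        Complex.norm_exp_ofReal_mul_I]
      norm_num
    have hx : (s n : ℂ) * Complex.exp ((θk k : ℝ) * Complex.I) ∈ Metric.closedBall (0:ℂ) 2 := by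
      simp only [Metric.mem_closedBall, dist_zero_right, norm_mul,
        Complex.norm_exp_ofReal_mul_I, Complex.norm_real, Real.norm_eq_abs, mul_one]
      exact hsn2
    have hdist : dist ((s n : ℂ) * Complex.exp ((θk k : ℝ) * Complex.I))
        (Complex.exp ((θk k : ℝ) * Complex.I)) < δ := by
      rw [Complex.dist_eq]
      have heq : (s n : ℂ) * Complex.exp ((θk k : ℝ) * Complex.I)
          - Complex.exp ((θk k : ℝ) * Complex.I)
          = ((s n - 1 : ℝ) : ℂ) * Complex.exp ((θk k : ℝ) * Complex.I) := by
        push_cast; ring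
      rw [heq, norm_mul, Complex.norm_real, Real.norm_eq_abs, Complex.norm_exp_ofReal_mul_I, mul_one]
      exact hsnδ
    have := hδ _ hx _ hy hdist
    rw [Real.dist_eq] at this
    exact this.le
  -- integrability
  have hint : ∀ k, IntervalIntegrable g MeasureTheory.volume (a k) (a (k+1)) :=
    fun k => hg.intervalIntegrable _ _
  -- splitting the integral
  have hsplit : ∫ θ in (0:ℝ)..(2*Real.pi), g θ
      = ∑ k ∈ Finset.range m, ∫ θ in a k..a (k+1), g θ := by
    rw [intervalIntegral.sum_integral_adjacent_intervals (fun k _ => hint k)]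
    have h0 : a 0 = 0 := by simp [ha]
    have hmm : a m = 2*Real.pi := by
      simp only [ha]
      field_simp
    rw [h0, hmm]
  -- each piece of the Riemann-sum estimate
  have step2 : ∀ k : ℕ, |2*Real.pi/(m:ℝ) * g (θk k) - ∫ θ in a k..a (k+1), g θ|
      ≤ ε/3 * (2*Real.pi/(m:ℝ)) := by
    intro k
    have hle : a k ≤ a (k+1) := by
      simp only [ha]
      push_cast
      gcongr
      linarith
    have hab : a (k+1) - a k = 2*Real.pi/(m:ℝ) := by
      simp only [ha]; push_cast; field_simp; ring
    have hconst : ∫ _θ in a k..a (k+1), g (θk k) = 2*Real.pi/(m:ℝ) * g (θk k) := by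
      rw [intervalIntegral.integral_const, hab, smul_eq_mul]
    rw [← hconst, ← intervalIntegral.integral_sub (intervalIntegrable_const) (hint k)]
    have hbound : ∀ θ ∈ Set.uIoc (a k) (a (k+1)), ‖g (θk k) - g θ‖ ≤ ε/3 := by
      intro θ hθ
      rw [Set.uIoc_of_le hle] at hθ
      obtain ⟨hθ1, hθ2⟩ := hθ
      have e1 : θk k - a k = Real.pi/(m:ℝ) := by
        simp only [hθk, ha]; push_cast; field_simp; ring
      have e2 : a (k+1) - θk k = Real.pi/(m:ℝ) := by
        simp only [hθk, ha]; push_cast; field_simp; ring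
      have habs : |θk k - θ| < δ := by
        have hπm : Real.pi/(m:ℝ) ≤ 2*Real.pi/(m:ℝ) := by
          gcongr; linarith
        rw [abs_lt]
        constructor <;> [linarith; linarith]
      -- both points on the unit circle
      have hy1 : Complex.exp ((θk k : ℝ) * Complex.I) ∈ Metric.closedBall (0:ℂ) 2 := by
        simp only [Metric.mem_closedBall, dist_zero_right,
          Complex.norm_exp_ofReal_mul_I]
        norm_num
      have hy2 : Complex.exp ((θ : ℝ) * Complex.I) ∈ Metric.closedBall (0:ℂ) 2 := by
        simp only [Metric.mem_closedBall, dist_zero_right,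
          Complex.norm_exp_ofReal_mul_I]
        norm_num
      have hlip := (lipschitzWith_circleMap (0:ℂ) 1).dist_le_mul (θk k) θ
      simp only [circleMap, Complex.ofReal_one, one_mul, zero_add] at hlip
      have hlip' : dist (Complex.exp ((θk k : ℝ) * Complex.I))
          (Complex.exp ((θ : ℝ) * Complex.I)) < δ := by
        have h5 : (Real.nnabs 1 : ℝ) = 1 := by
          simp
        calc dist (Complex.exp ((θk k : ℝ) * Complex.I)) (Complex.exp ((θ : ℝ) * Complex.I))
            ≤ (Real.nnabs 1 : ℝ) * dist (θk k) θ := hlip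
          _ = dist (θk k) θ := by rw [h5, one_mul]
          _ < δ := by rw [Real.dist_eq]; exact habs
      have := hδ _ hy1 _ hy2 hlip'
      rw [Real.dist_eq] at this
      simpa [hgdef, Real.norm_eq_abs] using this.le
    have hnorm := intervalIntegral.norm_integral_le_of_norm_le_const hbound
    rw [Real.norm_eq_abs] at hnorm
    calc |∫ θ in a k..a (k+1), (g (θk k) - g θ)| ≤ ε/3 * |a (k+1) - a k| := hnorm
      _ = ε/3 * (2*Real.pi/(m:ℝ)) := by rw [hab, abs_of_pos (by positivity)]
  -- assemble
  simp only [hθk']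
  set T : ℝ := (1/(m:ℝ)) * ∑ k ∈ Finset.range m,
    f ((s n : ℂ) * Complex.exp ((θk k : ℝ) * Complex.I)) with hT
  set R : ℝ := (1/(m:ℝ)) * ∑ k ∈ Finset.range m, g (θk k) with hR
  have h1 : dist T R ≤ ε/3 := by
    rw [Real.dist_eq, hT, hR, ← mul_sub, ← Finset.sum_sub_distrib, abs_mul,
      abs_of_pos (by positivity : (0:ℝ) < 1/(m:ℝ))]
    calc (1/(m:ℝ)) * |∑ k ∈ Finset.range m,
          (f ((s n : ℂ) * Complex.exp ((θk k : ℝ) * Complex.I)) - g (θk k))|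
        ≤ (1/(m:ℝ)) * ∑ k ∈ Finset.range m,
          |f ((s n : ℂ) * Complex.exp ((θk k : ℝ) * Complex.I)) - g (θk k)| := by
          gcongr
          exact Finset.abs_sum_le_sum_abs _ _
      _ ≤ (1/(m:ℝ)) * ∑ _k ∈ Finset.range m, (ε/3) := by
          gcongr with k hk
          exact step1 k
      _ = ε/3 := by
          rw [Finset.sum_const, Finset.card_range, nsmul_eq_mul]
          field_simp
  have h2 : dist R L ≤ ε/3 := by
    rw [Real.dist_eq]
    have hRL : R - L = (1/(2*Real.pi)) * ∑ k ∈ Finset.range m,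
        (2*Real.pi/(m:ℝ) * g (θk k) - ∫ θ in a k..a (k+1), g θ) := by
      rw [hR, hL, hsplit, Finset.mul_sum, Finset.mul_sum, Finset.mul_sum,
        ← Finset.sum_sub_distrib]
      refine Finset.sum_congr rfl fun k _ => ?_
      rw [mul_sub]
      congr 1
      rw [← mul_assoc]
      congr 1
      field_simp
    rw [hRL, abs_mul, abs_of_pos (by positivity : (0:ℝ) < 1/(2*Real.pi))]
    calc (1/(2*Real.pi)) * |∑ k ∈ Finset.range m,
          (2*Real.pi/(m:ℝ) * g (θk k) - ∫ θ in a k..a (k+1), g θ)|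
        ≤ (1/(2*Real.pi)) * ∑ k ∈ Finset.range m,
          |2*Real.pi/(m:ℝ) * g (θk k) - ∫ θ in a k..a (k+1), g θ| := by
          gcongr
          exact Finset.abs_sum_le_sum_abs _ _
      _ ≤ (1/(2*Real.pi)) * ∑ _k ∈ Finset.range m, (ε/3 * (2*Real.pi/(m:ℝ))) := by
          gcongr with k hk
          exact step2 k
      _ = ε/3 := by
          rw [Finset.sum_const, Finset.card_range, nsmul_eq_mul]
          field_simp
  calc dist T L ≤ dist T R + dist R L := dist_triangle _ _ _
    _ ≤ ε/3 + ε/3 := add_le_add h1 h2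
    _ < ε := by linarith


/-- Example 4.2: the normalized counting measures of the finite critical values
`c^n + c` of `p_n(z) = z^n + z`, where `c` runs over the roots of
`p_n′(z) = n z^{n−1} + 1`, converge weakly to the uniform probability measure on
the unit circle. -/
theorem critical_values_equidistribute_on_circle (f : BoundedContinuousFunction ℂ ℝ) :
    Tendsto
      (fun n : ℕ =>
        (1 / ((n : ℝ) - 1)) *
          (((C (n : ℂ) * X ^ (n - 1) + 1 : ℂ[X]).roots).map
            fun c => f (c ^ n + c)).sum)
      atTop
      (nhds ((1 / (2 * Real.pi)) *
        ∫ θ in (0 : ℝ)..(2 * Real.pi), f (Complex.exp (θ * Complex.I)))) := by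
  refine Tendsto.congr' ?_ (lemC f sfun lemB)
  filter_upwards [eventually_ge_atTop 2] with n hn
  exact (lemA f n hn).symm
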